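/- arXiv:2005.07750 — 3 statements merged into one kernel-verified Lean document; each statement's English description precedes it below -/
import Mathlib

section
/- In the Temperley–Lieb algebra TL_3, with w_2 = A^2·1 + (1 − A^{-4})e_1 and w̄_2 = A^{-2}·1 + (1 − A^4)e_1 in TL_2 and ι : TL_2 → TL_3 the R-algebra homomorphism with ι(e_1) = e_1, the following identity holds: A^2·ι(w_2) + ι(w_2)·e_2 − A^{-4}·e_2·ι(w̄_2) = A^4·1 + (A^2 − A^{-6})e_2 + (A^2 − A^{-2})e_1 + (1 − A^{-4})(e_1e_2 + e_2e_1). -/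
/-!
Temperley–Lieb algebra `TL k` over the ring `R = ℤ[A, A⁻¹]` of Laurent polynomials,
with generators `e_1, …, e_{k-1}` and relations
`eᵢ² = δ eᵢ` (with `δ = -A² - A⁻²`), `eᵢ eᵢ₊₁ eᵢ = eᵢ`, `eᵢ₊₁ eᵢ eᵢ₊₁ = eᵢ₊₁`, and
`eᵢ eⱼ = eⱼ eᵢ` for `|i - j| ≥ 2`.
-/

noncomputable section

/-- The ring `R = ℤ[A, A⁻¹]` of Laurent polynomials over `ℤ`. -/
abbrev R : Type := LaurentPolynomial ℤ

/-- `A n` denotes the `n`-th power `Aⁿ` of the distinguished invertible element `A`. -/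
def A (n : ℤ) : R := LaurentPolynomial.T n

/-- `δ = -A² - A⁻²`. -/
def TLδ : R := -A 2 - A (-2)

/-- The Temperley–Lieb relations on the free `R`-algebra on `n` generators `ι 0, …, ι (n-1)`
(where `ι i` corresponds to `e_{i+1}`). -/
inductive TLRel (n : ℕ) : FreeAlgebra R (Fin n) → FreeAlgebra R (Fin n) → Prop
  | sq (i : Fin n) :
      TLRel n (FreeAlgebra.ι R i * FreeAlgebra.ι R i) (TLδ • FreeAlgebra.ι R i)
  | braid_right (i j : Fin n) (h : (i : ℕ) + 1 = (j : ℕ)) :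
      TLRel n (FreeAlgebra.ι R i * FreeAlgebra.ι R j * FreeAlgebra.ι R i) (FreeAlgebra.ι R i)
  | braid_left (i j : Fin n) (h : (i : ℕ) + 1 = (j : ℕ)) :
      TLRel n (FreeAlgebra.ι R j * FreeAlgebra.ι R i * FreeAlgebra.ι R j) (FreeAlgebra.ι R j)
  | comm (i j : Fin n) (h : (i : ℕ) + 2 ≤ (j : ℕ)) :
      TLRel n (FreeAlgebra.ι R i * FreeAlgebra.ι R j) (FreeAlgebra.ι R j * FreeAlgebra.ι R i)

/-- The Temperley–Lieb algebra `TL_k` on `k` strands: the associative unital `R`-algebra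
with generators `e_1, …, e_{k-1}` and the Temperley–Lieb relations. -/
def TL (k : ℕ) : Type := RingQuot (TLRel (k - 1))

instance (k : ℕ) : Ring (TL k) := inferInstanceAs (Ring (RingQuot _))
instance (k : ℕ) : Algebra R (TL k) := inferInstanceAs (Algebra R (RingQuot _))

/-- The generator `e_{i+1}` of `TL k`, for `i : Fin (k-1)`. -/
def e (k : ℕ) (i : Fin (k - 1)) : TL k :=
  RingQuot.mkAlgHom R (TLRel (k - 1)) (FreeAlgebra.ι R i)

lemma e_sq (k : ℕ) (i : Fin (k - 1)) : e k i * e k i = TLδ • e k i := by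
  have h := RingQuot.mkAlgHom_rel R (TLRel.sq (n := k - 1) i)
  simp only [map_mul, map_smul] at h
  exact h

lemma e_braid_right (k : ℕ) (i j : Fin (k - 1)) (h : (i : ℕ) + 1 = (j : ℕ)) :
    e k i * e k j * e k i = e k i := by
  have h' := RingQuot.mkAlgHom_rel R (TLRel.braid_right (n := k - 1) i j h)
  simp only [map_mul] at h'
  exact h'

lemma e_braid_left (k : ℕ) (i j : Fin (k - 1)) (h : (i : ℕ) + 1 = (j : ℕ)) :
    e k j * e k i * e k j = e k j := by
  have h' := RingQuot.mkAlgHom_rel R (TLRel.braid_left (n := k - 1) i j h)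
  simp only [map_mul] at h'
  exact h'

lemma e_comm (k : ℕ) (i j : Fin (k - 1)) (h : (i : ℕ) + 2 ≤ (j : ℕ)) :
    e k i * e k j = e k j * e k i := by
  have h' := RingQuot.mkAlgHom_rel R (TLRel.comm (n := k - 1) i j h)
  simp only [map_mul] at h'
  exact h'

/-- The canonical `R`-algebra homomorphism `TL k →ₐ[R] TL m` (for `k ≤ m`) sending each
generator `e_i` of `TL k` to the generator `e_i` of `TL m`. -/
def TLincl {k m : ℕ} (h : k ≤ m) : TL k →ₐ[R] TL m :=
  RingQuot.liftAlgHom R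
    ⟨FreeAlgebra.lift R (fun i => e m (Fin.castLE (Nat.sub_le_sub_right h 1) i)), by
      intro x y hxy
      induction hxy with
      | sq i => simp [map_mul, map_smul, FreeAlgebra.lift_ι_apply, e_sq]
      | braid_right i j hij =>
          simp only [map_mul, FreeAlgebra.lift_ι_apply]
          exact e_braid_right m _ _ (by simpa using hij)
      | braid_left i j hij =>
          simp only [map_mul, FreeAlgebra.lift_ι_apply]
          exact e_braid_left m _ _ (by simpa using hij)
      | comm i j hij =>
          simp only [map_mul, FreeAlgebra.lift_ι_apply]
          exact e_comm m _ _ (by simpa using hij)⟩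

@[simp] lemma TLincl_e {k m : ℕ} (h : k ≤ m) (i : Fin (k - 1)) :
    TLincl h (e k i) = e m (Fin.castLE (Nat.sub_le_sub_right h 1) i) := by
  rw [TLincl, e]
  erw [RingQuot.liftAlgHom_mkAlgHom_apply]
  rw [FreeAlgebra.lift_ι_apply]


/-- Equation (3) of the paper: the recursive computation of `w(Id₃)` in the
Temperley–Lieb algebra `TL₃`, where `w₂ = A²·1 + (1 - A⁻⁴)e₁` and `w̄₂ = A⁻²·1 + (1 - A⁴)e₁`
in `TL₂`, and `ι : TL₂ →ₐ[R] TL₃` is the `R`-algebra homomorphism with `ι e₁ = e₁`. -/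
theorem wId3_recursion :
    let e₁' : TL 2 := e 2 ⟨0, by norm_num⟩
    let e₁ : TL 3 := e 3 ⟨0, by norm_num⟩
    let e₂ : TL 3 := e 3 ⟨1, by norm_num⟩
    let ι : TL 2 →ₐ[R] TL 3 := TLincl (by norm_num)
    let w₂ : TL 2 := A 2 • (1 : TL 2) + (1 - A (-4)) • e₁'
    let w₂bar : TL 2 := A (-2) • (1 : TL 2) + (1 - A 4) • e₁'
    A 2 • ι w₂ + ι w₂ * e₂ - A (-4) • (e₂ * ι w₂bar) =
      A 4 • (1 : TL 3) + (A 2 - A (-6)) • e₂ + (A 2 - A (-2)) • e₁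
        + (1 - A (-4)) • (e₁ * e₂ + e₂ * e₁) := by
  intro e₁' e₁ e₂ ι w₂ w₂bar
  have hιe : ι e₁' = e₁ := TLincl_e (by norm_num) ⟨0, by norm_num⟩
  simp only [w₂, w₂bar, map_add, map_smul, map_one, hιe, smul_add, add_mul, mul_add,
    smul_mul_assoc, mul_smul_comm, one_mul, mul_one]
  match_scalars <;>
    simp only [A, ← LaurentPolynomial.T_add, mul_one, one_mul] <;>
    ring_nf <;>
    rw [← LaurentPolynomial.T_add] <;> (first | (norm_num [LaurentPolynomial.T_zero]; ring) | norm_num [LaurentPolynomial.T_zero])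

end
end

section
/- In the Temperley–Lieb algebra TL_4, let P_l = (A^{10} − A^6)e_1 + (A^{10} − A^2)e_2 + (A^{10} − A^{-2})e_3 + (A^8 − A^4)(e_2e_1 + e_1e_2) + (A^8 − 1)(e_2e_3 + e_3e_2 + e_1e_3) + (A^6 − A^2)(e_1e_2e_3 + e_1e_3e_2 + e_2e_3e_1 + e_3e_2e_1), P_t = (A^{10} − A^{-2})e_1 + (A^{10} − A^2)e_2 + (A^{10} − A^6)e_3 + (A^8 − A^4)(e_2e_3 + e_3e_2) + (A^8 − 1)(e_2e_1 + e_1e_2 + e_1e_3) + (A^6 − A^2)(e_1e_2e_3 + e_1e_3e_2 + e_2e_3e_1 + e_3e_2e_1), d_1 = (A^8 − 1)e_1 − (A^2 − A^6)e_1e_3, and d_2 = (A^8 − 1)e_3 − (A^2 − A^6)e_3e_1. Then the element (P_t − P_l) − (A^4 − 1)(e_2e_1 + e_1e_2 − e_2e_3 − e_3e_2) lies in the R-submodule of TL_4 generated by d_1 and d_2. -/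
/-!
Temperley–Lieb algebra `TL k` over the ring `R = ℤ[A, A⁻¹]` of Laurent polynomials,
with generators `e_1, …, e_{k-1}` and relations
`eᵢ² = δ eᵢ` (with `δ = -A² - A⁻²`), `eᵢ eᵢ₊₁ eᵢ = eᵢ`, `eᵢ₊₁ eᵢ eᵢ₊₁ = eᵢ₊₁`, and
`eᵢ eⱼ = eⱼ eᵢ` for `|i - j| ≥ 2`.
-/

noncomputable section

/-- derivation of Equation (10) of the paper: the element
`(P_t - P_l) - (A⁴-1)(e₂e₁ + e₁e₂ - e₂e₃ - e₃e₂)` lies in the `R`-submodule of `TL₄`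
generated by the sliding relation elements `d₁` and `d₂`. -/
theorem new_relation_derivation :
    let e₁ : TL 4 := e 4 ⟨0, by norm_num⟩
    let e₂ : TL 4 := e 4 ⟨1, by norm_num⟩
    let e₃ : TL 4 := e 4 ⟨2, by norm_num⟩
    let Pl : TL 4 := (A 10 - A 6) • e₁ + (A 10 - A 2) • e₂ + (A 10 - A (-2)) • e₃
        + (A 8 - A 4) • (e₂ * e₁ + e₁ * e₂) + (A 8 - 1) • (e₂ * e₃ + e₃ * e₂ + e₁ * e₃)
        + (A 6 - A 2) • (e₁ * e₂ * e₃ + e₁ * e₃ * e₂ + e₂ * e₃ * e₁ + e₃ * e₂ * e₁)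
    let Pt : TL 4 := (A 10 - A (-2)) • e₁ + (A 10 - A 2) • e₂ + (A 10 - A 6) • e₃
        + (A 8 - A 4) • (e₂ * e₃ + e₃ * e₂) + (A 8 - 1) • (e₂ * e₁ + e₁ * e₂ + e₁ * e₃)
        + (A 6 - A 2) • (e₁ * e₂ * e₃ + e₁ * e₃ * e₂ + e₂ * e₃ * e₁ + e₃ * e₂ * e₁)
    let d₁ : TL 4 := (A 8 - 1) • e₁ - (A 2 - A 6) • (e₁ * e₃)
    let d₂ : TL 4 := (A 8 - 1) • e₃ - (A 2 - A 6) • (e₃ * e₁)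
    (Pt - Pl) - (A 4 - 1) • (e₂ * e₁ + e₁ * e₂ - e₂ * e₃ - e₃ * e₂)
      ∈ Submodule.span R ({d₁, d₂} : Set (TL 4)) := by
  intro e₁ e₂ e₃ Pl Pt d₁ d₂
  rw [Submodule.mem_span_pair]
  refine ⟨A (-2), -A (-2), ?_⟩
  have hc : e₃ * e₁ = e₁ * e₃ := (e_comm 4 ⟨0, by norm_num⟩ ⟨2, by norm_num⟩ (by norm_num)).symm
  have hmul : ∀ m n : ℤ, A m * A n = A (m + n) := fun m n => (LaurentPolynomial.T_add m n).symm
  have h1 : A (-2) * (A 8 - 1) = A 6 - A (-2) := by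
    rw [mul_sub, hmul, mul_one]; norm_num
  have h2 : A (-2) * (A 2 - A 6) = 1 - A 4 := by
    rw [mul_sub, hmul, hmul]; norm_num [A, LaurentPolynomial.T_zero]
  simp only [Pl, Pt, d₁, d₂, hc, smul_sub, smul_smul, neg_smul, neg_mul, h1, h2]
  module

end
end

section
/- The Temperley–Lieb algebra TL_4 over R = ℤ[A, A^{-1}] is a free R-module of rank 14, with basis given by the fourteen elements 1, e_1, e_2, e_3, e_1e_3, e_1e_2, e_2e_1, e_2e_3, e_3e_2, e_1e_2e_3, e_3e_2e_1, e_1e_3e_2, e_2e_3e_1, e_2e_1e_3e_2. -/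
/-!
Temperley–Lieb algebra `TL k` over the ring `R = ℤ[A, A⁻¹]` of Laurent polynomials,
with generators `e_1, …, e_{k-1}` and relations
`eᵢ² = δ eᵢ` (with `δ = -A² - A⁻²`), `eᵢ eᵢ₊₁ eᵢ = eᵢ`, `eᵢ₊₁ eᵢ eᵢ₊₁ = eᵢ₊₁`, and
`eᵢ eⱼ = eⱼ eᵢ` for `|i - j| ≥ 2`.
-/

noncomputable section

namespace TLAux

abbrev V : Type := Fin 14 →₀ R

/-- `u l` is the `l`-th standard basis vector of `V`. -/
def u (l : Fin 14) : V := Finsupp.single l 1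

/-- The table of left multiplication by the generators on the 14 basis monomials. -/
def tbl : Fin 3 → Fin 14 → V
  | 0, 0 => u 1  | 0, 1 => TLδ • u 1  | 0, 2 => u 5  | 0, 3 => u 4
  | 0, 4 => TLδ • u 4  | 0, 5 => TLδ • u 5  | 0, 6 => u 1  | 0, 7 => u 9
  | 0, 8 => u 11 | 0, 9 => TLδ • u 9  | 0, 10 => u 4 | 0, 11 => TLδ • u 11
  | 0, 12 => u 4 | 0, 13 => u 11
  | 1, 0 => u 2  | 1, 1 => u 6  | 1, 2 => TLδ • u 2  | 1, 3 => u 7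
  | 1, 4 => u 12 | 1, 5 => u 2  | 1, 6 => TLδ • u 6  | 1, 7 => TLδ • u 7
  | 1, 8 => u 2  | 1, 9 => u 7  | 1, 10 => u 6 | 1, 11 => u 13
  | 1, 12 => TLδ • u 12 | 1, 13 => TLδ • u 13
  | 2, 0 => u 3  | 2, 1 => u 4  | 2, 2 => u 8  | 2, 3 => TLδ • u 3
  | 2, 4 => TLδ • u 4  | 2, 5 => u 11 | 2, 6 => u 10 | 2, 7 => u 3
  | 2, 8 => TLδ • u 8  | 2, 9 => u 4  | 2, 10 => TLδ • u 10 | 2, 11 => TLδ • u 11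
  | 2, 12 => u 4 | 2, 13 => u 11

/-- The regular-representation endomorphisms. -/
def EV (i : Fin 3) : Module.End R V := Finsupp.lift V R (Fin 14) (tbl i)

lemma EV_u (i : Fin 3) (l : Fin 14) : EV i (u l) = tbl i l := by
  simp [EV, u]

lemma endExt {f g : Module.End R V} (h : ∀ l, f (u l) = g (u l)) : f = g :=
  Finsupp.lhom_ext fun a b => by
    have hb : (Finsupp.single a b : V) = b • u a := by simp [u]
    rw [hb, map_smul, map_smul, h]

lemma EV_sq (i : Fin 3) : EV i * EV i = TLδ • EV i :=
  endExt fun l => by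
    fin_cases i <;> fin_cases l <;>
      simp [Module.End.mul_apply, map_smul, EV_u, tbl]

lemma EV_b01 : EV 0 * EV 1 * EV 0 = EV 0 :=
  endExt fun l => by
    fin_cases l <;> simp [Module.End.mul_apply, map_smul, EV_u, tbl]

lemma EV_b12 : EV 1 * EV 2 * EV 1 = EV 1 :=
  endExt fun l => by
    fin_cases l <;> simp [Module.End.mul_apply, map_smul, EV_u, tbl]

lemma EV_b10 : EV 1 * EV 0 * EV 1 = EV 1 :=
  endExt fun l => by
    fin_cases l <;> simp [Module.End.mul_apply, map_smul, EV_u, tbl]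

lemma EV_b21 : EV 2 * EV 1 * EV 2 = EV 2 :=
  endExt fun l => by
    fin_cases l <;> simp [Module.End.mul_apply, map_smul, EV_u, tbl]

lemma EV_c02 : EV 0 * EV 2 = EV 2 * EV 0 :=
  endExt fun l => by
    fin_cases l <;> simp [Module.End.mul_apply, map_smul, EV_u, tbl]




lemma rel_lift ⦃x y : FreeAlgebra R (Fin 3)⦄ (hxy : TLRel 3 x y) :
    FreeAlgebra.lift R EV x = FreeAlgebra.lift R EV y := by
  induction hxy with
  | sq i => simp [map_mul, map_smul, FreeAlgebra.lift_ι_apply, EV_sq]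
  | braid_right i j hij =>
      simp only [map_mul, FreeAlgebra.lift_ι_apply]
      fin_cases i <;> fin_cases j
      · exact absurd hij (by decide)
      · exact EV_b01
      · exact absurd hij (by decide)
      · exact absurd hij (by decide)
      · exact absurd hij (by decide)
      · exact EV_b12
      · exact absurd hij (by decide)
      · exact absurd hij (by decide)
      · exact absurd hij (by decide)
  | braid_left i j hij =>
      simp only [map_mul, FreeAlgebra.lift_ι_apply]
      fin_cases i <;> fin_cases j
      · exact absurd hij (by decide)
      · exact EV_b10
      · exact absurd hij (by decide)
      · exact absurd hij (by decide)
      · exact absurd hij (by decide)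
      · exact EV_b21
      · exact absurd hij (by decide)
      · exact absurd hij (by decide)
      · exact absurd hij (by decide)
  | comm i j hij =>
      simp only [map_mul, FreeAlgebra.lift_ι_apply]
      fin_cases i <;> fin_cases j
      · exact absurd hij (by decide)
      · exact absurd hij (by decide)
      · exact EV_c02
      · exact absurd hij (by decide)
      · exact absurd hij (by decide)
      · exact absurd hij (by decide)
      · exact absurd hij (by decide)
      · exact absurd hij (by decide)
      · exact absurd hij (by decide)

/-- The representation `TL 4 → End V`. -/
def Φ : TL 4 →ₐ[R] Module.End R V :=
  RingQuot.liftAlgHom R ⟨FreeAlgebra.lift R EV, rel_lift⟩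

lemma Φ_e (i : Fin 3) : Φ (e 4 i) = EV i := by
  rw [Φ, e]
  erw [RingQuot.liftAlgHom_mkAlgHom_apply]
  rw [FreeAlgebra.lift_ι_apply]

/-- Evaluation of the representation at the basis vector `u 0`. -/
def ψ : TL 4 →ₗ[R] V := (LinearMap.applyₗ (u 0)).comp Φ.toLinearMap

/-- The three generators of `TL 4`. -/
def E1 : TL 4 := e 4 0
def E2 : TL 4 := e 4 1
def E3 : TL 4 := e 4 2

/-- The fourteen basis monomials. -/
def bb : Fin 14 → TL 4 :=
  ![1, E1, E2, E3, E1 * E3, E1 * E2, E2 * E1, E2 * E3, E3 * E2,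
    E1 * E2 * E3, E3 * E2 * E1, E1 * E3 * E2, E2 * E3 * E1, E2 * E1 * E3 * E2]

lemma psi_apply (x : TL 4) : ψ x = Φ x (u 0) := rfl

lemma ΦE1 : Φ E1 = EV 0 := Φ_e 0
lemma ΦE2 : Φ E2 = EV 1 := Φ_e 1
lemma ΦE3 : Φ E3 = EV 2 := Φ_e 2

lemma psiE1 (x : TL 4) : ψ (E1 * x) = EV 0 (ψ x) := by
  rw [psi_apply, psi_apply, map_mul, ΦE1]; rfl
lemma psiE2 (x : TL 4) : ψ (E2 * x) = EV 1 (ψ x) := by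
  rw [psi_apply, psi_apply, map_mul, ΦE2]; rfl
lemma psiE3 (x : TL 4) : ψ (E3 * x) = EV 2 (ψ x) := by
  rw [psi_apply, psi_apply, map_mul, ΦE3]; rfl

lemma pb0 : ψ 1 = u 0 := by
  rw [psi_apply, map_one]; rfl
lemma pb1 : ψ E1 = u 1 := by
  rw [psi_apply, ΦE1, EV_u]; simp only [tbl]
lemma pb2 : ψ E2 = u 2 := by
  rw [psi_apply, ΦE2, EV_u]; simp only [tbl]
lemma pb3 : ψ E3 = u 3 := by
  rw [psi_apply, ΦE3, EV_u]; simp only [tbl]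
lemma pb4 : ψ (E1 * E3) = u 4 := by
  rw [psiE1, pb3, EV_u]; simp only [tbl]
lemma pb5 : ψ (E1 * E2) = u 5 := by
  rw [psiE1, pb2, EV_u]; simp only [tbl]
lemma pb6 : ψ (E2 * E1) = u 6 := by
  rw [psiE2, pb1, EV_u]; simp only [tbl]
lemma pb7 : ψ (E2 * E3) = u 7 := by
  rw [psiE2, pb3, EV_u]; simp only [tbl]
lemma pb8 : ψ (E3 * E2) = u 8 := by
  rw [psiE3, pb2, EV_u]; simp only [tbl]
lemma pb9 : ψ (E1 * E2 * E3) = u 9 := by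
  rw [mul_assoc, psiE1, psiE2, pb3]; simp only [EV_u, tbl]
lemma pb10 : ψ (E3 * E2 * E1) = u 10 := by
  rw [mul_assoc, psiE3, psiE2, pb1]; simp only [EV_u, tbl]
lemma pb11 : ψ (E1 * E3 * E2) = u 11 := by
  rw [mul_assoc, psiE1, psiE3, pb2]; simp only [EV_u, tbl]
lemma pb12 : ψ (E2 * E3 * E1) = u 12 := by
  rw [mul_assoc, psiE2, psiE3, pb1]; simp only [EV_u, tbl]
lemma pb13 : ψ (E2 * E1 * E3 * E2) = u 13 := by
  rw [mul_assoc, mul_assoc, psiE2, psiE1, psiE3, pb2]; simp only [EV_u, tbl]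

lemma psi_bb : ⇑ψ ∘ bb = u := by
  funext l
  fin_cases l
  · exact pb0
  · exact pb1
  · exact pb2
  · exact pb3
  · exact pb4
  · exact pb5
  · exact pb6
  · exact pb7
  · exact pb8
  · exact pb9
  · exact pb10
  · exact pb11
  · exact pb12
  · exact pb13

lemma bb_indep : LinearIndependent R bb := by
  have h0 := (Finsupp.basisSingleOne (R := R) (ι := Fin 14)).linearIndependent
  rw [Finsupp.coe_basisSingleOne] at h0
  have h : LinearIndependent R (⇑ψ ∘ bb) := by
    rw [psi_bb]; exact h0
  exact h.of_comp ψ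


lemma r11 : E1 * E1 = TLδ • E1 := e_sq 4 0
lemma r22 : E2 * E2 = TLδ • E2 := e_sq 4 1
lemma r33 : E3 * E3 = TLδ • E3 := e_sq 4 2
lemma r121 : E1 * E2 * E1 = E1 := e_braid_right 4 0 1 (by decide)
lemma r212 : E2 * E1 * E2 = E2 := e_braid_left 4 0 1 (by decide)
lemma r232 : E2 * E3 * E2 = E2 := e_braid_right 4 1 2 (by decide)
lemma r323 : E3 * E2 * E3 = E3 := e_braid_left 4 1 2 (by decide)
lemma r13 : E1 * E3 = E3 * E1 := e_comm 4 0 2 (by decide)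

/-- The span of the fourteen monomials. -/
abbrev S : Submodule R (TL 4) := Submodule.span R (Set.range bb)

lemma bb_mem (l : Fin 14) : bb l ∈ S := Submodule.subset_span ⟨l, rfl⟩

lemma mul_bb_mem (i : Fin 3) (l : Fin 14) : e 4 i * bb l ∈ S := by
  fin_cases i <;> fin_cases l
  -- i = 0
  · show E1 * 1 ∈ S
    rw [mul_one]; exact bb_mem 1
  · show E1 * E1 ∈ S
    rw [r11]; exact S.smul_mem _ (bb_mem 1)
  · show E1 * E2 ∈ S
    exact bb_mem 5
  · show E1 * E3 ∈ S
    exact bb_mem 4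
  · show E1 * (E1 * E3) ∈ S
    rw [← mul_assoc, r11, smul_mul_assoc]; exact S.smul_mem _ (bb_mem 4)
  · show E1 * (E1 * E2) ∈ S
    rw [← mul_assoc, r11, smul_mul_assoc]; exact S.smul_mem _ (bb_mem 5)
  · show E1 * (E2 * E1) ∈ S
    rw [← mul_assoc, r121]; exact bb_mem 1
  · show E1 * (E2 * E3) ∈ S
    rw [← mul_assoc]; exact bb_mem 9
  · show E1 * (E3 * E2) ∈ S
    rw [← mul_assoc]; exact bb_mem 11
  · show E1 * (E1 * E2 * E3) ∈ S
    simp only [← mul_assoc]; rw [r11, smul_mul_assoc, smul_mul_assoc]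
    exact S.smul_mem _ (bb_mem 9)
  · show E1 * (E3 * E2 * E1) ∈ S
    have h : E1 * (E3 * E2 * E1) = E1 * E3 := by
      simp only [← mul_assoc]
      rw [r13, mul_assoc E3 E1 E2, mul_assoc E3 (E1 * E2) E1, r121]
    rw [h]; exact bb_mem 4
  · show E1 * (E1 * E3 * E2) ∈ S
    simp only [← mul_assoc]; rw [r11, smul_mul_assoc, smul_mul_assoc]
    exact S.smul_mem _ (bb_mem 11)
  · show E1 * (E2 * E3 * E1) ∈ S
    have h : E1 * (E2 * E3 * E1) = E1 * E3 := by
      simp only [← mul_assoc]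
      rw [mul_assoc (E1 * E2) E3 E1, ← r13, ← mul_assoc, r121]
    rw [h]; exact bb_mem 4
  · show E1 * (E2 * E1 * E3 * E2) ∈ S
    have h : E1 * (E2 * E1 * E3 * E2) = E1 * E3 * E2 := by
      simp only [← mul_assoc]; rw [r121]
    rw [h]; exact bb_mem 11
  -- i = 1
  · show E2 * 1 ∈ S
    rw [mul_one]; exact bb_mem 2
  · show E2 * E1 ∈ S
    exact bb_mem 6
  · show E2 * E2 ∈ S
    rw [r22]; exact S.smul_mem _ (bb_mem 2)
  · show E2 * E3 ∈ S
    exact bb_mem 7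
  · show E2 * (E1 * E3) ∈ S
    have h : E2 * (E1 * E3) = E2 * E3 * E1 := by rw [r13, ← mul_assoc]
    rw [h]; exact bb_mem 12
  · show E2 * (E1 * E2) ∈ S
    rw [← mul_assoc, r212]; exact bb_mem 2
  · show E2 * (E2 * E1) ∈ S
    rw [← mul_assoc, r22, smul_mul_assoc]; exact S.smul_mem _ (bb_mem 6)
  · show E2 * (E2 * E3) ∈ S
    rw [← mul_assoc, r22, smul_mul_assoc]; exact S.smul_mem _ (bb_mem 7)
  · show E2 * (E3 * E2) ∈ S
    rw [← mul_assoc, r232]; exact bb_mem 2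
  · show E2 * (E1 * E2 * E3) ∈ S
    have h : E2 * (E1 * E2 * E3) = E2 * E3 := by
      simp only [← mul_assoc]; rw [r212]
    rw [h]; exact bb_mem 7
  · show E2 * (E3 * E2 * E1) ∈ S
    have h : E2 * (E3 * E2 * E1) = E2 * E1 := by
      simp only [← mul_assoc]; rw [r232]
    rw [h]; exact bb_mem 6
  · show E2 * (E1 * E3 * E2) ∈ S
    have h : E2 * (E1 * E3 * E2) = E2 * E1 * E3 * E2 := by
      simp only [← mul_assoc]
    rw [h]; exact bb_mem 13
  · show E2 * (E2 * E3 * E1) ∈ S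
    simp only [← mul_assoc]; rw [r22, smul_mul_assoc, smul_mul_assoc]
    exact S.smul_mem _ (bb_mem 12)
  · show E2 * (E2 * E1 * E3 * E2) ∈ S
    simp only [← mul_assoc]; rw [r22, smul_mul_assoc, smul_mul_assoc, smul_mul_assoc]
    exact S.smul_mem _ (bb_mem 13)
  -- i = 2
  · show E3 * 1 ∈ S
    rw [mul_one]; exact bb_mem 3
  · show E3 * E1 ∈ S
    rw [← r13]; exact bb_mem 4
  · show E3 * E2 ∈ S
    exact bb_mem 8
  · show E3 * E3 ∈ S
    rw [r33]; exact S.smul_mem _ (bb_mem 3)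
  · show E3 * (E1 * E3) ∈ S
    have h : E3 * (E1 * E3) = TLδ • (E1 * E3) := by
      rw [← mul_assoc, ← r13, mul_assoc, r33, mul_smul_comm]
    rw [h]; exact S.smul_mem _ (bb_mem 4)
  · show E3 * (E1 * E2) ∈ S
    have h : E3 * (E1 * E2) = E1 * E3 * E2 := by rw [← mul_assoc, ← r13]
    rw [h]; exact bb_mem 11
  · show E3 * (E2 * E1) ∈ S
    rw [← mul_assoc]; exact bb_mem 10
  · show E3 * (E2 * E3) ∈ S
    rw [← mul_assoc, r323]; exact bb_mem 3
  · show E3 * (E3 * E2) ∈ S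
    rw [← mul_assoc, r33, smul_mul_assoc]; exact S.smul_mem _ (bb_mem 8)
  · show E3 * (E1 * E2 * E3) ∈ S
    have h : E3 * (E1 * E2 * E3) = E1 * E3 := by
      simp only [← mul_assoc]
      rw [← r13, mul_assoc E1 E3 E2, mul_assoc E1 (E3 * E2) E3, r323]
    rw [h]; exact bb_mem 4
  · show E3 * (E3 * E2 * E1) ∈ S
    simp only [← mul_assoc]; rw [r33, smul_mul_assoc, smul_mul_assoc]
    exact S.smul_mem _ (bb_mem 10)
  · show E3 * (E1 * E3 * E2) ∈ S
    have h : E3 * (E1 * E3 * E2) = TLδ • (E1 * E3 * E2) := by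
      simp only [← mul_assoc]
      rw [← r13, mul_assoc E1 E3 E3, r33, mul_smul_comm, smul_mul_assoc]
    rw [h]; exact S.smul_mem _ (bb_mem 11)
  · show E3 * (E2 * E3 * E1) ∈ S
    have h : E3 * (E2 * E3 * E1) = E1 * E3 := by
      simp only [← mul_assoc]
      rw [r323, ← r13]
    rw [h]; exact bb_mem 4
  · show E3 * (E2 * E1 * E3 * E2) ∈ S
    have h : E3 * (E2 * E1 * E3 * E2) = E1 * E3 * E2 := by
      simp only [← mul_assoc]
      rw [mul_assoc (E3 * E2) E1 E3, r13, ← mul_assoc (E3 * E2) E3 E1, r323]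
    rw [h]; exact bb_mem 11

/-- The quotient map, typed at `TL 4`. -/
def mk' : FreeAlgebra R (Fin 3) →ₐ[R] TL 4 := RingQuot.mkAlgHom R (TLRel 3)

lemma mk'_surjective : Function.Surjective mk' :=
  RingQuot.mkAlgHom_surjective R (TLRel 3)

lemma bb_span : ⊤ ≤ Submodule.span R (Set.range bb) := by
  rintro x -
  have key : ∀ y : FreeAlgebra R (Fin 3),
      ∀ s ∈ S, mk' y * s ∈ S := by
    intro y
    induction y using FreeAlgebra.induction with
    | grade0 r =>
        intro s hs
        rw [AlgHom.commutes, ← Algebra.smul_def]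
        exact S.smul_mem r hs
    | grade1 i =>
        intro s hs
        induction hs using Submodule.span_induction with
        | mem t ht =>
            obtain ⟨l, rfl⟩ := ht
            exact mul_bb_mem i l
        | zero => simp
        | add a b ha hb iha ihb => rw [mul_add]; exact S.add_mem iha ihb
        | smul c a ha ih => rw [mul_smul_comm]; exact S.smul_mem c ih
    | mul a b ha hb =>
        intro s hs
        rw [map_mul, mul_assoc]
        exact ha _ (hb s hs)
    | add a b ha hb =>
        intro s hs
        rw [map_add, add_mul]
        exact S.add_mem (ha s hs) (hb s hs)
  obtain ⟨y, rfl⟩ := mk'_surjective x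
  simpa using key y 1 (bb_mem 0)

end TLAux

/-- `TL₄` is a free `R`-module of rank `14`, with basis the fourteen
elements `1, e₁, e₂, e₃, e₁e₃, e₁e₂, e₂e₁, e₂e₃, e₃e₂, e₁e₂e₃, e₃e₂e₁, e₁e₃e₂, e₂e₃e₁,
e₂e₁e₃e₂`. -/
theorem TL4_free_of_rank_14 :
    let e₁ : TL 4 := e 4 ⟨0, by norm_num⟩
    let e₂ : TL 4 := e 4 ⟨1, by norm_num⟩
    let e₃ : TL 4 := e 4 ⟨2, by norm_num⟩
    ∃ b : Module.Basis (Fin 14) R (TL 4),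
      ⇑b = ![1, e₁, e₂, e₃, e₁ * e₃, e₁ * e₂, e₂ * e₁, e₂ * e₃, e₃ * e₂,
        e₁ * e₂ * e₃, e₃ * e₂ * e₁, e₁ * e₃ * e₂, e₂ * e₃ * e₁, e₂ * e₁ * e₃ * e₂] := by
  intro e₁ e₂ e₃
  exact ⟨Module.Basis.mk TLAux.bb_indep TLAux.bb_span, Module.Basis.coe_mk _ _⟩

end
end
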